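/- For the profile u_k(ξ) = (1 + e^{-kξ})^{-1}, the travelling-wave ODE U'' + cU' + U(1-U)(U-α) = 0 is satisfied by U = u_k if and only if k² = 1/2 and c = k - (1/2 + α)/k, i.e. c = -√2(1/2 - α) when k = 1/√2. -/

import Mathlib

private lemma exp_hasDeriv (k ξ : ℝ) :
    HasDerivAt (fun x : ℝ => Real.exp (-k * x)) (-k * Real.exp (-k * ξ)) ξ := by
  have h : HasDerivAt (fun x : ℝ => -k * x) (-k) ξ := by
    simpa using (hasDerivAt_id ξ).const_mul (-k)
  simpa [mul_comm] using h.exp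

private lemma f_hasDeriv (k ξ : ℝ) :
    HasDerivAt (fun x : ℝ => (1 + Real.exp (-k * x))⁻¹)
      (k * Real.exp (-k * ξ) / (1 + Real.exp (-k * ξ)) ^ 2) ξ := by
  have hD : (0:ℝ) < 1 + Real.exp (-k * ξ) := by positivity
  have h := ((exp_hasDeriv k ξ).const_add 1).fun_inv hD.ne'
  refine h.congr_deriv ?_
  ring

private lemma f_deriv (k : ℝ) :
    deriv (fun x : ℝ => (1 + Real.exp (-k * x))⁻¹)
      = fun ξ => k * Real.exp (-k * ξ) / (1 + Real.exp (-k * ξ)) ^ 2 := by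
  funext ξ; exact (f_hasDeriv k ξ).deriv

private lemma f_deriv2 (k ξ : ℝ) :
    iteratedDeriv 2 (fun x : ℝ => (1 + Real.exp (-k * x))⁻¹) ξ
      = (k * (-k * Real.exp (-k * ξ)) * (1 + Real.exp (-k * ξ)) ^ 2
          - k * Real.exp (-k * ξ) * (2 * (1 + Real.exp (-k * ξ)) * (-k * Real.exp (-k * ξ))))
        / ((1 + Real.exp (-k * ξ)) ^ 2) ^ 2 := by
  have hc : HasDerivAt (fun x : ℝ => k * Real.exp (-k * x)) (k * (-k * Real.exp (-k * ξ))) ξ :=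
    (exp_hasDeriv k ξ).const_mul k
  have hd : HasDerivAt (fun x : ℝ => (1 + Real.exp (-k * x)) ^ 2)
      (2 * (1 + Real.exp (-k * ξ)) * (-k * Real.exp (-k * ξ))) ξ := by
    have h2 := ((exp_hasDeriv k ξ).const_add 1).fun_pow 2
    refine h2.congr_deriv ?_
    norm_num
  have hne : ((1 + Real.exp (-k * ξ)) ^ 2) ≠ 0 := by positivity
  rw [iteratedDeriv_succ, iteratedDeriv_one, f_deriv k]
  exact (hc.div hd hne).deriv

private lemma factored (α c k E : ℝ) (hE : 0 < E) :
    ((k * (-k * E) * (1 + E) ^ 2 - k * E * (2 * (1 + E) * (-k * E))) / ((1 + E) ^ 2) ^ 2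
      + c * (k * E / (1 + E) ^ 2)
      + (1 + E)⁻¹ * (1 - (1 + E)⁻¹) * ((1 + E)⁻¹ - α) = 0)
    ↔ ((k ^ 2 + c * k - α) * E + (-k ^ 2 + c * k + 1 - α) = 0) := by
  have hD : (0:ℝ) < 1 + E := by linarith
  have h1 : (k * (-k * E) * (1 + E) ^ 2 - k * E * (2 * (1 + E) * (-k * E))) / ((1 + E) ^ 2) ^ 2
      + c * (k * E / (1 + E) ^ 2)
      + (1 + E)⁻¹ * (1 - (1 + E)⁻¹) * ((1 + E)⁻¹ - α)
      = E / (1 + E) ^ 3 * ((k ^ 2 + c * k - α) * E + (-k ^ 2 + c * k + 1 - α)) := by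
    field_simp
    ring
  rw [h1]
  have hpos : 0 < E / (1 + E) ^ 3 := by positivity
  constructor
  · intro h
    rcases mul_eq_zero.mp h with h | h
    · exact absurd h hpos.ne'
    · exact h
  · intro h; rw [h, mul_zero]

/-- For the profile `u_k(ξ) = (1 + e^{-kξ})⁻¹` with `k > 0`, the travelling-wave
ODE `U'' + c U' + U(1-U)(U-α) = 0` holds identically if and only if `k² = 1/2`
and `c = -√2 (1/2 - α)` (the value of `k - (1/2+α)/k` type formula at `k = 1/√2`). -/
theorem nagumo_profile_ODE_iff (α c k : ℝ) (hk : 0 < k) :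
    (∀ ξ : ℝ,
        iteratedDeriv 2 (fun x => (1 + Real.exp (-k * x))⁻¹) ξ
          + c * deriv (fun x => (1 + Real.exp (-k * x))⁻¹) ξ
          + (1 + Real.exp (-k * ξ))⁻¹ * (1 - (1 + Real.exp (-k * ξ))⁻¹)
            * ((1 + Real.exp (-k * ξ))⁻¹ - α) = 0)
      ↔ (k ^ 2 = 1 / 2 ∧ c = -Real.sqrt 2 * (1 / 2 - α)) := by
  have hsq2 : Real.sqrt 2 ^ 2 = 2 := Real.sq_sqrt (by norm_num)
  have hs2pos : (0:ℝ) < Real.sqrt 2 := Real.sqrt_pos.mpr (by norm_num)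
  have hmain : ∀ ξ : ℝ,
      (iteratedDeriv 2 (fun x => (1 + Real.exp (-k * x))⁻¹) ξ
          + c * deriv (fun x => (1 + Real.exp (-k * x))⁻¹) ξ
          + (1 + Real.exp (-k * ξ))⁻¹ * (1 - (1 + Real.exp (-k * ξ))⁻¹)
            * ((1 + Real.exp (-k * ξ))⁻¹ - α) = 0)
      ↔ ((k ^ 2 + c * k - α) * Real.exp (-k * ξ) + (-k ^ 2 + c * k + 1 - α) = 0) := by
    intro ξ
    rw [f_deriv2 k ξ, (f_hasDeriv k ξ).deriv]
    exact factored α c k _ (Real.exp_pos _)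
  constructor
  · intro h
    have h0 := (hmain 0).mp (h 0)
    have h1 := (hmain (-(1/k))).mp (h (-(1/k)))
    rw [show Real.exp (-k * 0) = 1 by norm_num] at h0
    rw [show -k * -(1/k) = 1 by field_simp] at h1
    have he : (1:ℝ) < Real.exp 1 := by
      have := Real.exp_one_gt_d9; linarith
    have hs : k ^ 2 + c * k - α = 0 := by
      have h2 : (k ^ 2 + c * k - α) * (Real.exp 1 - 1) = 0 := by linear_combination h1 - h0
      rcases mul_eq_zero.mp h2 with h3 | h3
      · exact h3
      · linarith
    have ht : -k ^ 2 + c * k + 1 - α = 0 := by linear_combination h0 - hs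
    have hk2 : k ^ 2 = 1 / 2 := by linarith
    have hk1 : k * Real.sqrt 2 = 1 := by
      have h2 : (k * Real.sqrt 2 - 1) * (k * Real.sqrt 2 + 1) = 0 := by
        linear_combination k ^ 2 * hsq2 + 2 * hk2
      rcases mul_eq_zero.mp h2 with h3 | h3
      · linarith
      · nlinarith [mul_pos hk hs2pos]
    refine ⟨hk2, ?_⟩
    linear_combination (-c) * hk1 + Real.sqrt 2 * hs - Real.sqrt 2 * hk2
  · rintro ⟨hk2, hc⟩ ξ
    have hk1 : k * Real.sqrt 2 = 1 := by
      have h2 : (k * Real.sqrt 2 - 1) * (k * Real.sqrt 2 + 1) = 0 := by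
        linear_combination k ^ 2 * hsq2 + 2 * hk2
      rcases mul_eq_zero.mp h2 with h3 | h3
      · linarith
      · nlinarith [mul_pos hk hs2pos]
    have hs : k ^ 2 + c * k - α = 0 := by
      linear_combination hk2 + (-(1/2 - α)) * hk1 + k * hc
    have ht : -k ^ 2 + c * k + 1 - α = 0 := by linear_combination hs - 2 * hk2
    exact (hmain ξ).mpr (by linear_combination Real.exp (-k * ξ) * hs + ht)
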